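/- Let D be a real graded division algebra over an abelian group G with D_e finite-dimensional. Then the center Z(D) is a graded subalgebra of D, and its support equals the radical of the alternating bicharacter β, rad β = {s ∈ K | β(s,t) = 1 for all t ∈ K}. -/
import Mathlib

open Module Polynomial

theorem auxGDA_frk {F : Type*} [Field F] [Algebra ℝ F] [FiniteDimensional ℝ F] :
    Module.finrank ℝ F ≤ 2 := by
  have halg : Algebra.IsAlgebraic ℝ F := Algebra.IsAlgebraic.of_finite ℝ F
  let f : F →ₐ[ℝ] ℂ := IsAlgClosed.lift
  have hinj : Function.Injective f.toLinearMap := f.toRingHom.injective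
  calc Module.finrank ℝ F ≤ Module.finrank ℝ ℂ := LinearMap.finrank_le_finrank_of_injective hinj
  _ = 2 := Complex.finrank_real_complex

theorem auxGDA_root {F : Type*} [Field F] [Algebra ℝ F] [FiniteDimensional ℝ F]
    (x y : F) (hy : Polynomial.aeval y (minpoly ℝ x) = 0) :
    y ∈ ((minpoly ℝ x).map (algebraMap ℝ F)).roots := by
  have hx : IsIntegral ℝ x := IsIntegral.of_finite ℝ x
  have hne : (minpoly ℝ x).map (algebraMap ℝ F) ≠ 0 :=
    Polynomial.map_ne_zero (minpoly.ne_zero hx)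
  rw [Polynomial.mem_roots hne, Polynomial.IsRoot.def, Polynomial.eval_map,
    ← Polynomial.aeval_def, hy]

theorem auxGDA_rootmap {F : Type*} [Field F] [Algebra ℝ F] [FiniteDimensional ℝ F]
    (σ : F →ₐ[ℝ] F) (x y : F) (hy : Polynomial.aeval y (minpoly ℝ x) = 0) :
    Polynomial.aeval (σ y) (minpoly ℝ x) = 0 := by
  rw [Polynomial.aeval_algHom_apply, hy, map_zero]

theorem auxGDA_three {F : Type*} [Field F] [Algebra ℝ F] [FiniteDimensional ℝ F]
    (x a b c : F) (hab : a ≠ b) (hac : a ≠ c) (hbc : b ≠ c)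
    (ha : a ∈ ((minpoly ℝ x).map (algebraMap ℝ F)).roots)
    (hb : b ∈ ((minpoly ℝ x).map (algebraMap ℝ F)).roots)
    (hc : c ∈ ((minpoly ℝ x).map (algebraMap ℝ F)).roots) : False := by
  classical
  set q := (minpoly ℝ x).map (algebraMap ℝ F) with hq
  have hdeg : q.natDegree ≤ 2 := by
    rw [hq, Polynomial.natDegree_map]
    exact (minpoly.natDegree_le x).trans auxGDA_frk
  have hsub : ({a, b, c} : Finset F) ⊆ q.roots.toFinset := by
    intro z hz
    simp only [Finset.mem_insert, Finset.mem_singleton] at hz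
    rcases hz with rfl | rfl | rfl <;> simp [Multiset.mem_toFinset, ha, hb, hc]
  have hcard : ({a, b, c} : Finset F).card = 3 := by
    rw [Finset.card_insert_of_notMem (by simp [hab, hac]),
      Finset.card_insert_of_notMem (by simp [hbc]), Finset.card_singleton]
  have := (Finset.card_le_card hsub).trans ((Multiset.toFinset_card_le _).trans
    ((Polynomial.card_roots' q).trans hdeg))
  omega

theorem auxGDA_sq {F : Type*} [Field F] [Algebra ℝ F] [FiniteDimensional ℝ F]
    (σ : F →ₐ[ℝ] F) (x : F) : σ (σ x) = x := by
  by_cases h1 : σ x = x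
  · rw [h1, h1]
  by_cases h2 : σ (σ x) = σ x
  · exact absurd (σ.toRingHom.injective h2) h1
  by_contra h3
  have hr : Polynomial.aeval x (minpoly ℝ x) = 0 := minpoly.aeval ℝ x
  exact auxGDA_three x x (σ x) (σ (σ x)) (Ne.symm h1) (Ne.symm h3) (Ne.symm h2)
    (auxGDA_root x x hr) (auxGDA_root x _ (auxGDA_rootmap σ x x hr))
    (auxGDA_root x _ (auxGDA_rootmap σ x _ (auxGDA_rootmap σ x x hr)))

theorem auxGDA_agree {F : Type*} [Field F] [Algebra ℝ F] [FiniteDimensional ℝ F]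
    (σ τ : F →ₐ[ℝ] F) (y z : F) (hy : σ y ≠ y) (hz : τ z ≠ z) : τ = σ := by
  classical
  have hynr : ∀ r : ℝ, y ≠ algebraMap ℝ F r := by
    intro r hr; exact hy (by rw [hr, σ.commutes])
  have hli : LinearIndependent ℝ ![1, y] := by
    rw [LinearIndependent.pair_iff]
    intro s t hst
    rw [Algebra.smul_def, Algebra.smul_def, mul_one] at hst
    by_cases ht : t = 0
    · subst ht
      refine ⟨?_, rfl⟩
      simp only [map_zero, zero_mul, add_zero] at hst
      exact (algebraMap ℝ F).injective (by rw [hst, map_zero])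
    · exfalso
      apply hynr (-s / t)
      have h' : algebraMap ℝ F t * y = - algebraMap ℝ F s := eq_neg_of_add_eq_zero_right hst
      have htF : algebraMap ℝ F t ≠ 0 := by
        simpa using (algebraMap ℝ F).injective.ne_iff.2 ht
      rw [map_div₀, map_neg, eq_div_iff htF, mul_comm, h']
  have h2le : 2 ≤ Module.finrank ℝ F := by
    simpa using hli.fintype_card_le_finrank
  have hrank : Module.finrank ℝ F = 2 := le_antisymm auxGDA_frk h2le
  let b := basisOfLinearIndependentOfCardEqFinrank hli (by simp [hrank])
  have hb : ⇑b = ![1, y] := coe_basisOfLinearIndependentOfCardEqFinrank hli _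
  have hτy : τ y ≠ y := by
    intro h
    apply hz
    have heq : τ.toLinearMap = (AlgHom.id ℝ F).toLinearMap := by
      apply b.ext
      intro i
      fin_cases i <;> simp [hb, h]
    exact LinearMap.congr_fun heq z
  have hτσ : τ y = σ y := by
    by_contra hne
    have hr : Polynomial.aeval y (minpoly ℝ y) = 0 := minpoly.aeval ℝ y
    exact auxGDA_three y y (σ y) (τ y) (Ne.symm hy) (Ne.symm hτy) (fun h => hne h.symm)
      (auxGDA_root y y hr) (auxGDA_root y _ (auxGDA_rootmap σ y y hr))
      (auxGDA_root y _ (auxGDA_rootmap τ y y hr))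
  have heq : τ.toLinearMap = σ.toLinearMap := by
    apply b.ext
    intro i
    fin_cases i <;> simp [hb, hτσ]
  exact AlgHom.ext fun x => LinearMap.congr_fun heq x

theorem auxGDA_h90 {F : Type*} [Field F] [Algebra ℝ F] [FiniteDimensional ℝ F]
    (σ : F →ₐ[ℝ] F) (y : F) (hy : σ y ≠ y) (γ : F) (hγ : σ γ * γ = 1) :
    ∃ d : F, d ≠ 0 ∧ σ d * γ = d := by
  have key : ∀ c : F, σ (c + σ c * γ) * γ = c + σ c * γ := by
    intro c
    rw [map_add, map_mul, auxGDA_sq σ c, add_mul, mul_assoc, hγ, mul_one, add_comm]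
  by_cases h1 : (1 : F) + σ 1 * γ = 0
  · refine ⟨y + σ y * γ, ?_, key y⟩
    rw [map_one, one_mul] at h1
    have hγ1 : γ = -1 := by linear_combination h1
    rw [hγ1, mul_neg_one, ← sub_eq_add_neg, sub_ne_zero]
    exact fun h => hy h.symm
  · exact ⟨1 + σ 1 * γ, h1, key 1⟩

variable {G : Type*} [CommGroup G] [DecidableEq G] {D : Type*} [Ring D] [Algebra ℝ D]

/-- A real graded division algebra. -/
def IsGDA (comp : G → Submodule ℝ D) : Prop :=
  DirectSum.IsInternal comp ∧ (1 : D) ∈ comp 1 ∧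
    (∀ (g h : G) (a b : D), a ∈ comp g → b ∈ comp h → a * b ∈ comp (g * h)) ∧
    ∀ (g : G) (a : D), a ∈ comp g → a ≠ 0 → IsUnit a

/-- The center `Z(D)` of a real graded division algebra with finite-dimensional
identity component is a graded subalgebra, and its support is the radical of the
alternating bicharacter `β`, i.e. the set of `s ∈ K` with `X_s X_t = X_t X_s` for
all `t ∈ K`, where `K = {t ∈ T | Int(X_t)|_{D_e} = id}`. -/
theorem stmt_4 (comp : G → Submodule ℝ D) (hgda : IsGDA comp)
    (hfd : FiniteDimensional ℝ ↥(comp (1 : G)))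
    (T : Subgroup G) (hT : ∀ g : G, comp g ≠ ⊥ ↔ g ∈ T)
    (X : ↥T → Dˣ) (hX : ∀ t : ↥T, (X t : D) ∈ comp (t : G))
    -- when `D_e` is not commutative (the quaternion case), the `X_t` are chosen
    -- in the centralizer of `D_e`
    (hXcent : ¬(∀ z ∈ comp (1 : G), ∀ w ∈ comp (1 : G), z * w = w * z) →
      ∀ (t : ↥T), ∀ z ∈ comp (1 : G), (X t : D) * z = z * (X t : D)) :
    ((Subalgebra.center ℝ D).toSubmodule =
        ⨆ g : G, comp g ⊓ (Subalgebra.center ℝ D).toSubmodule) ∧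
      ∀ s : ↥T,
        (comp (s : G) ⊓ (Subalgebra.center ℝ D).toSubmodule ≠ ⊥ ↔
          ((∀ z ∈ comp (1 : G), (X s : D) * z = z * (X s : D)) ∧
            ∀ t : ↥T, (∀ z ∈ comp (1 : G), (X t : D) * z = z * (X t : D)) →
              (X s : D) * (X t : D) = (X t : D) * (X s : D))) := by
  classical
  obtain ⟨hint, hone, hmulmem, hunit⟩ := hgda
  -- set up the graded ring structure over the additive version of `G`
  let A : Additive G → Submodule ℝ D := fun i => comp i.toMul
  have hintA : DirectSum.IsInternal A := hint
  letI : SetLike.GradedMonoid A :=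
    { one_mem := hone
      mul_mem := fun {i j} a b ha hb => hmulmem _ _ a b ha hb }
  letI : DirectSum.Decomposition A := hintA.chooseDecomposition
  letI : GradedRing A := {}
  -- nontriviality
  haveI hDnt : Nontrivial D := by
    obtain ⟨x, hx, hx0⟩ := Submodule.exists_mem_ne_zero_of_ne_bot ((hT 1).2 T.one_mem)
    exact ⟨x, 0, hx0⟩
  -- inverses of homogeneous units are homogeneous
  have hinv : ∀ (g : G) (u : Dˣ), (u : D) ∈ comp g → ((↑u⁻¹ : D) ∈ comp g⁻¹) := by
    intro g u hu
    have hzero : ∀ i : Additive G, i ≠ Additive.ofMul g⁻¹ →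
        ((DirectSum.decompose A (↑u⁻¹ : D) i : D) = 0) := by
      intro i hi
      have h2 : (DirectSum.decompose A ((↑u⁻¹ : D) * (u : D)) (i + Additive.ofMul g) : D)
          = (DirectSum.decompose A (↑u⁻¹ : D) i : D) * (u : D) :=
        DirectSum.coe_decompose_mul_add_of_right_mem A hu
      rw [Units.inv_mul] at h2
      have hne : i + Additive.ofMul g ≠ 0 := by
        intro h
        apply hi
        have : i = - Additive.ofMul g := by rw [eq_neg_of_add_eq_zero_left h]
        rw [this]; rfl
      have h3 : (DirectSum.decompose A (1 : D) (i + Additive.ofMul g) : D) = 0 := by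
        rw [DirectSum.decompose_of_mem_ne A (SetLike.GradedMonoid.toGradedOne.one_mem) hne.symm]
      rw [h3] at h2
      exact (Units.mul_left_eq_zero u).1 h2.symm
    rw [← DirectSum.sum_support_decompose A (↑u⁻¹ : D)]
    apply Submodule.sum_mem
    intro i _
    by_cases h : i = Additive.ofMul g⁻¹
    · subst h; exact (DirectSum.decompose A (↑u⁻¹ : D) (Additive.ofMul g⁻¹)).2
    · rw [hzero i h]; exact Submodule.zero_mem _
  -- central elements are exactly those commuting with all homogeneous elements
  have hcen : ∀ x : D, (∀ (g : G), ∀ a ∈ comp g, x * a = a * x) →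
      x ∈ Subalgebra.center ℝ D := by
    intro x hx
    rw [Subalgebra.mem_center_iff]
    intro b
    conv_lhs => rw [← DirectSum.sum_support_decompose A b]
    conv_rhs => rw [← DirectSum.sum_support_decompose A b]
    rw [Finset.sum_mul, Finset.mul_sum]
    refine Finset.sum_congr rfl fun i _ => ?_
    exact (hx i.toMul _ (DirectSum.decompose A b i).2).symm
  -- elements of components outside the support are zero
  have hbot : ∀ g : G, g ∉ T → ∀ a ∈ comp g, a = 0 := by
    intro g hg a ha
    have : comp g = ⊥ := by
      by_contra h'
      exact hg ((hT g).1 h')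
    rw [this] at ha
    simpa using ha
  -- conjugation of identity-component elements by homogeneous units
  have hconj : ∀ (t : ↥T) (z : D), z ∈ comp (1 : G) →
      (X t : D) * z * ↑(X t)⁻¹ ∈ comp (1 : G) := by
    intro t z hz
    have h := hmulmem _ _ _ _ (hmulmem _ _ _ _ (hX t) hz) (hinv _ _ (hX t))
    rwa [show ((t : G) * 1 * (t : G)⁻¹ : G) = 1 by group] at h
  constructor
  · -- the center is a graded submodule
    refine le_antisymm ?_ (iSup_le fun g => inf_le_right)
    intro c hc
    rw [Subalgebra.mem_toSubmodule, Subalgebra.mem_center_iff] at hc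
    rw [← DirectSum.sum_support_decompose A c]
    apply Submodule.sum_mem
    intro i _
    apply Submodule.mem_iSup_of_mem i.toMul
    refine Submodule.mem_inf.mpr ⟨(DirectSum.decompose A c i).2, ?_⟩
    rw [Subalgebra.mem_toSubmodule]
    apply hcen
    intro g a ha
    have h1 : (DirectSum.decompose A (c * a) (i + Additive.ofMul g) : D)
        = (DirectSum.decompose A c i : D) * a :=
      DirectSum.coe_decompose_mul_add_of_right_mem A ha
    have h2 : (DirectSum.decompose A (a * c) (Additive.ofMul g + i) : D)
        = a * (DirectSum.decompose A c i : D) :=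
      DirectSum.coe_decompose_mul_add_of_left_mem A ha
    rw [hc a, add_comm] at h2
    rw [← h1, h2]
  intro s
  constructor
  · -- forward direction
    intro hne
    obtain ⟨c, hc, hc0⟩ := Submodule.exists_mem_ne_zero_of_ne_bot hne
    obtain ⟨hcs, hczm⟩ := Submodule.mem_inf.mp hc
    rw [Subalgebra.mem_toSubmodule, Subalgebra.mem_center_iff] at hczm
    set d := c * ↑(X s)⁻¹ with hd
    have hd1 : d ∈ comp (1 : G) := by
      have h := hmulmem _ _ _ _ hcs (hinv _ _ (hX s))
      rwa [show ((s : G) * (s : G)⁻¹ : G) = 1 by group] at h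
    have hcd : c = d * ↑(X s) := by rw [hd, Units.inv_mul_cancel_right]
    have hcu : IsUnit c := hunit _ c hcs hc0
    have hdu : IsUnit d := hcu.mul (X s)⁻¹.isUnit
    constructor
    · by_cases hcomm : ∀ z ∈ comp (1 : G), ∀ w ∈ comp (1 : G), z * w = w * z
      · intro z hz
        have e1 : c * z = z * c := (hczm z).symm
        rw [hcd] at e1
        -- d * Xs * z = z * (d * Xs)
        have e2 : (X s : D) * z = ((X s : D) * z * ↑(X s)⁻¹) * ↑(X s) :=
          (Units.inv_mul_cancel_right _ _).symm
        have e3 : (d * ((X s : D) * z * ↑(X s)⁻¹)) * ↑(X s) = (z * d) * ↑(X s) := by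
          rw [mul_assoc d, ← e2, ← mul_assoc, e1, mul_assoc z d, ← mul_assoc]
        have e4 : d * ((X s : D) * z * ↑(X s)⁻¹) = z * d := (Units.isUnit (X s)).mul_right_cancel e3
        have e5 : z * d = d * z := hcomm z hz d hd1
        rw [e5] at e4
        have e6 : (X s : D) * z * ↑(X s)⁻¹ = z := hdu.mul_left_cancel e4
        rw [e2, e6]
      · exact hXcent hcomm s
    · intro t ht
      have e1 : c * ↑(X t) = ↑(X t) * c := (hczm _).symm
      rw [hcd] at e1
      have e2 : ↑(X t) * d = d * ↑(X t) := ht d hd1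
      have e3 : d * ((X s : D) * ↑(X t)) = d * (↑(X t) * (X s : D)) := by
        rw [← mul_assoc, e1, ← mul_assoc, e2, mul_assoc]
      exact hdu.mul_left_cancel e3
  · -- backward direction
    rintro ⟨Hs1, Hs2⟩
    suffices h : ∃ d : D, d ∈ comp (1 : G) ∧ d ≠ 0 ∧
        (∀ z ∈ comp (1 : G), (d * ↑(X s)) * z = z * (d * ↑(X s))) ∧
        (∀ t : ↥T, (d * ↑(X s)) * ↑(X t) = ↑(X t) * (d * ↑(X s))) by
      obtain ⟨d, hd1, hd0, hii, hi⟩ := h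
      have hcs : d * ↑(X s) ∈ comp (s : G) := by
        have h := hmulmem _ _ _ _ hd1 (hX s)
        rwa [one_mul] at h
      have hc0 : d * (↑(X s) : D) ≠ 0 := fun h => hd0 (((X s).mul_left_eq_zero).1 h)
      rw [Submodule.ne_bot_iff]
      refine ⟨d * ↑(X s), Submodule.mem_inf.mpr ⟨hcs, ?_⟩, hc0⟩
      rw [Subalgebra.mem_toSubmodule]
      apply hcen
      intro g a ha
      by_cases hg : g ∈ T
      · set t : ↥T := ⟨g, hg⟩
        have hz : a * ↑(X t)⁻¹ ∈ comp (1 : G) := by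
          have h := hmulmem _ _ _ _ ha (hinv _ _ (hX t))
          rwa [show (g * (t : G)⁻¹ : G) = 1 by simp [t]] at h
        have ha' : a = (a * ↑(X t)⁻¹) * ↑(X t) := (Units.inv_mul_cancel_right _ _).symm
        rw [ha', ← mul_assoc, hii _ hz, mul_assoc _ _ (↑(X t) : D), hi t, ← mul_assoc]
      · rw [hbot g hg a ha, mul_zero, zero_mul]
    by_cases hK : ∀ t : ↥T, ∀ z ∈ comp (1 : G), (X t : D) * z = z * (X t : D)
    · refine ⟨1, hone, one_ne_zero, ?_, ?_⟩
      · intro z hz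
        rw [one_mul]
        exact Hs1 z hz
      · intro t
        rw [one_mul]
        exact Hs2 t (hK t)
    · -- the commutative (field) case
      push_neg at hK
      obtain ⟨t₀, z₀, hz₀m, hz₀⟩ := hK
      have hcomm : ∀ z ∈ comp (1 : G), ∀ w ∈ comp (1 : G), z * w = w * z := by
        by_contra h
        exact hz₀ (hXcent h t₀ z₀ hz₀m)
      -- the identity component as a field
      let S : Subalgebra ℝ D := (comp (1 : G)).toSubalgebra hone
        (fun x y hx hy => by
          have h := hmulmem _ _ _ _ hx hy
          rwa [one_mul] at h)
      letI : CommRing ↥S := { (inferInstance : Ring ↥S) with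
        mul_comm := fun a b => Subtype.ext (hcomm a a.2 b b.2) }
      have hSfield : IsField ↥S := by
        refine ⟨⟨0, 1, fun h => one_ne_zero (α := D) (congrArg Subtype.val h).symm⟩,
          mul_comm, ?_⟩
        intro a ha
        have ha' : (a : D) ≠ 0 := fun h => ha (Subtype.ext h)
        obtain ⟨u, hu⟩ := hunit _ _ a.2 ha'
        have hmem : (↑u⁻¹ : D) ∈ comp (1 : G) := by
          have h := hinv 1 u (by rw [hu]; exact a.2)
          rwa [inv_one] at h
        refine ⟨⟨↑u⁻¹, hmem⟩, Subtype.ext ?_⟩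
        show (a : D) * ↑u⁻¹ = 1
        rw [← hu, Units.mul_inv]
      letI : Field ↥S := hSfield.toField
      haveI : FiniteDimensional ℝ ↥S := by
        let e : ↥(comp (1 : G)) ≃ₗ[ℝ] ↥S :=
          { toFun := fun x => ⟨x.1, x.2⟩
            invFun := fun x => ⟨x.1, x.2⟩
            map_add' := fun _ _ => rfl
            map_smul' := fun _ _ => rfl
            left_inv := fun _ => rfl
            right_inv := fun _ => rfl }
        exact Module.Finite.equiv e
      -- conjugation automorphisms of the identity component
      let σ : ↥T → (↥S →ₐ[ℝ] ↥S) := fun t =>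
        { toFun := fun z => ⟨(X t : D) * ↑z * ↑(X t)⁻¹, hconj t ↑z z.2⟩
          map_one' := Subtype.ext (by
            show (X t : D) * 1 * ↑(X t)⁻¹ = 1
            rw [mul_one, Units.mul_inv])
          map_mul' := fun a b => Subtype.ext (by
            show (X t : D) * ((a : D) * (b : D)) * ↑(X t)⁻¹
              = ((X t : D) * (a : D) * ↑(X t)⁻¹) * ((X t : D) * (b : D) * ↑(X t)⁻¹)
            simp [mul_assoc, Units.inv_mul_cancel_left])
          map_zero' := Subtype.ext (by
            show (X t : D) * 0 * ↑(X t)⁻¹ = 0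
            rw [mul_zero, zero_mul])
          map_add' := fun a b => Subtype.ext (by
            show (X t : D) * ((a : D) + (b : D)) * ↑(X t)⁻¹
              = (X t : D) * (a : D) * ↑(X t)⁻¹ + (X t : D) * (b : D) * ↑(X t)⁻¹
            rw [mul_add, add_mul])
          commutes' := fun r => Subtype.ext (by
            show (X t : D) * (algebraMap ℝ D r) * ↑(X t)⁻¹ = algebraMap ℝ D r
            rw [← Algebra.commutes r ((X t : D)), mul_assoc, Units.mul_inv, mul_one]) }
      have hσcoe : ∀ (t : ↥T) (z : ↥S), ((σ t z : ↥S) : D) = (X t : D) * ↑z * ↑(X t)⁻¹ :=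
        fun _ _ => rfl
      have hσmul : ∀ (t : ↥T) (z : ↥S), (X t : D) * ↑z = ↑(σ t z) * (X t : D) := by
        intro t z
        rw [hσcoe, Units.inv_mul_cancel_right]
      have hfix1 : ∀ (t : ↥T) (z : ↥S), (X t : D) * ↑z = ↑z * (X t : D) → σ t z = z := by
        intro t z h
        apply Subtype.ext
        rw [hσcoe, h, Units.mul_inv_cancel_right]
      have hfix2 : ∀ (t : ↥T) (z : ↥S), σ t z = z → (X t : D) * ↑z = ↑z * (X t : D) := by
        intro t z h
        rw [hσmul t z, h]
      have hσsq : ∀ (t : ↥T) (z : ↥S), σ t (σ t z) = z := fun t z => auxGDA_sq (σ t) z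
      set z₀' : ↥S := ⟨z₀, hz₀m⟩ with hz₀'
      have hy₀ : σ t₀ z₀' ≠ z₀' := fun h => hz₀ (hfix2 t₀ z₀' h)
      -- the values of the commutation bicharacter at `s`
      have hγmem : ∀ t : ↥T, (X t : D) * ↑(X s) * ↑(X t)⁻¹ * ↑(X s)⁻¹ ∈ comp (1 : G) := by
        intro t
        have h := hmulmem _ _ _ _ (hmulmem _ _ _ _ (hmulmem _ _ _ _ (hX t) (hX s))
          (hinv _ _ (hX t))) (hinv _ _ (hX s))
        rwa [show ((t : G) * s * (t : G)⁻¹ * (s : G)⁻¹ : G) = 1 by rw [mul_comm (t : G) (s : G)]; group] at h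
      set γ : ↥T → ↥S := fun t => ⟨(X t : D) * ↑(X s) * ↑(X t)⁻¹ * ↑(X s)⁻¹, hγmem t⟩ with hγdef
      have hγ : ∀ t : ↥T, (X t : D) * ↑(X s) = ↑(γ t) * (↑(X s) * ↑(X t)) := by
        intro t
        show _ = (X t : D) * ↑(X s) * ↑(X t)⁻¹ * ↑(X s)⁻¹ * ((↑(X s) : D) * ↑(X t))
        simp [mul_assoc, Units.inv_mul_cancel_left, Units.inv_mul]
      have hγ1 : ∀ t : ↥T, (X s : D) * ↑(X t) = ↑(X t) * ↑(X s) → γ t = 1 := by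
        intro t h
        apply Subtype.ext
        show (X t : D) * ↑(X s) * ↑(X t)⁻¹ * ↑(X s)⁻¹ = 1
        rw [← h, Units.mul_inv_cancel_right, Units.mul_inv]
      -- witnesses for noncommuting homogeneous units
      have hwit : ∀ t : ↥T, (¬ ∀ z ∈ comp (1 : G), (X t : D) * z = z * (X t : D)) →
          ∃ z : ↥S, σ t z ≠ z := by
        intro t ht
        push_neg at ht
        obtain ⟨z, hzm, hzn⟩ := ht
        exact ⟨⟨z, hzm⟩, fun h => hzn (hfix2 t _ h)⟩
      have hagree : ∀ t : ↥T, (¬ ∀ z ∈ comp (1 : G), (X t : D) * z = z * (X t : D)) →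
          σ t = σ t₀ := by
        intro t ht
        obtain ⟨z₁, hz₁⟩ := hwit t ht
        exact auxGDA_agree (σ t₀) (σ t) z₀' z₁ hy₀ hz₁
      -- transfer of commutation with the identity component along units of the same degree
      have htrans : ∀ (r : ↥T) (w : Dˣ), (w : D) ∈ comp (r : G) →
          (∀ z ∈ comp (1 : G), (w : D) * z = z * (w : D)) →
          ∀ z ∈ comp (1 : G), (X r : D) * z = z * (X r : D) := by
        intro r w hw hwz z hz
        have hu : ((↑((X r)⁻¹ * w) : D)) ∈ comp (1 : G) := by
          have h := hmulmem _ _ _ _ (hinv _ _ (hX r)) hw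
          rwa [show ((r : G)⁻¹ * r : G) = 1 by group] at h
        have hXru : (X r : D) * ↑((X r)⁻¹ * w) = ↑w := by
          show (X r : D) * (↑(X r)⁻¹ * ↑w) = ↑w
          rw [Units.mul_inv_cancel_left]
        have e : ((X r : D) * z) * ↑((X r)⁻¹ * w) = ((z : D) * ↑(X r)) * ↑((X r)⁻¹ * w) := by
          calc ((X r : D) * z) * ↑((X r)⁻¹ * w)
              = (X r : D) * (z * ↑((X r)⁻¹ * w)) := mul_assoc _ _ _
            _ = (X r : D) * (↑((X r)⁻¹ * w) * z) := by rw [hcomm z hz _ hu]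
            _ = ((X r : D) * ↑((X r)⁻¹ * w)) * z := (mul_assoc _ _ _).symm
            _ = ↑w * z := by rw [hXru]
            _ = z * ↑w := hwz z hz
            _ = z * ((X r : D) * ↑((X r)⁻¹ * w)) := by rw [hXru]
            _ = ((z : D) * ↑(X r)) * ↑((X r)⁻¹ * w) := (mul_assoc _ _ _).symm
        exact ((X r)⁻¹ * w).isUnit.mul_right_cancel e
      -- squares of homogeneous units commute with the identity component
      have h2comm : ∀ t : ↥T, ∀ z ∈ comp (1 : G), ((X t : D) * ↑(X t)) * z = z * ((X t : D) * ↑(X t)) := by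
        intro t z hz
        have h1 : (X t : D) * ↑(⟨z, hz⟩ : ↥S) = ↑(σ t ⟨z, hz⟩) * (X t : D) := hσmul t _
        have h2 : (X t : D) * ↑(σ t ⟨z, hz⟩) = ↑(σ t (σ t ⟨z, hz⟩)) * (X t : D) := hσmul t _
        rw [hσsq] at h2
        calc ((X t : D) * ↑(X t)) * z = (X t : D) * ((X t : D) * ↑(⟨z, hz⟩ : ↥S)) := mul_assoc _ _ _
          _ = (X t : D) * (↑(σ t ⟨z, hz⟩) * (X t : D)) := by rw [h1]
          _ = ((X t : D) * ↑(σ t ⟨z, hz⟩)) * (X t : D) := (mul_assoc _ _ _).symm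
          _ = (↑(⟨z, hz⟩ : ↥S) * (X t : D)) * (X t : D) := by rw [h2]
          _ = z * ((X t : D) * ↑(X t)) := mul_assoc _ _ _
      have hsqK : ∀ t : ↥T, ∀ z ∈ comp (1 : G), (X (t * t) : D) * z = z * (X (t * t) : D) := by
        intro t
        refine htrans (t * t) (X t * X t) ?_ ?_
        · exact hmulmem _ _ _ _ (hX t) (hX t)
        · intro z hz
          exact h2comm t z hz
      -- `X s` commutes with any unit whose degree it commutes with
      have hXsgen : ∀ (r : ↥T) (w : Dˣ), (w : D) ∈ comp (r : G) →
          ((X s : D) * ↑(X r) = ↑(X r) * (X s : D)) →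
          (X s : D) * ↑w = ↑w * (X s : D) := by
        intro r w hw hXsr
        have hu : ((↑((X r)⁻¹ * w) : D)) ∈ comp (1 : G) := by
          have h := hmulmem _ _ _ _ (hinv _ _ (hX r)) hw
          rwa [show ((r : G)⁻¹ * r : G) = 1 by group] at h
        have hXru : (X r : D) * ↑((X r)⁻¹ * w) = ↑w := by
          show (X r : D) * (↑(X r)⁻¹ * ↑w) = ↑w
          rw [Units.mul_inv_cancel_left]
        calc (X s : D) * ↑w = (X s : D) * ((X r : D) * ↑((X r)⁻¹ * w)) := by rw [hXru]
          _ = ((X s : D) * ↑(X r)) * ↑((X r)⁻¹ * w) := (mul_assoc _ _ _).symm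
          _ = (↑(X r) * (X s : D)) * ↑((X r)⁻¹ * w) := by rw [hXsr]
          _ = ↑(X r) * ((X s : D) * ↑((X r)⁻¹ * w)) := mul_assoc _ _ _
          _ = ↑(X r) * (↑((X r)⁻¹ * w) * (X s : D)) := by rw [Hs1 _ hu]
          _ = ((X r : D) * ↑((X r)⁻¹ * w)) * (X s : D) := (mul_assoc _ _ _).symm
          _ = ↑w * (X s : D) := by rw [hXru]
      -- the square relation for `γ`
      have hγ0 : σ t₀ (γ t₀) * γ t₀ = 1 := by
        have hXs2 : (X s : D) * ↑(X t₀ * X t₀) = ↑(X t₀ * X t₀) * (X s : D) :=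
          hXsgen (t₀ * t₀) (X t₀ * X t₀) (hmulmem _ _ _ _ (hX t₀) (hX t₀))
            (Hs2 (t₀ * t₀) (hsqK t₀))
        have e1 : (X t₀ : D) * ↑(X s) = ↑(γ t₀) * (↑(X s) * ↑(X t₀)) := hγ t₀
        have e2 : (X t₀ : D) * ↑(γ t₀) = ↑(σ t₀ (γ t₀)) * (X t₀ : D) := hσmul t₀ _
        have emain : (↑(σ t₀ (γ t₀)) * ↑(γ t₀)) * ↑(X s * (X t₀ * X t₀))
            = (1 : D) * ↑(X s * (X t₀ * X t₀)) := by
          have : ((X s : D) * ((X t₀ : D) * ↑(X t₀)))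
              = (↑(σ t₀ (γ t₀)) * ↑(γ t₀)) * ((X s : D) * ((X t₀ : D) * ↑(X t₀))) := by
            calc (X s : D) * ((X t₀ : D) * ↑(X t₀))
                = ((X s : D) * ↑(X t₀ * X t₀)) := by simp only [Units.val_mul, mul_assoc]
              _ = ↑(X t₀ * X t₀) * (X s : D) := hXs2
              _ = (X t₀ : D) * (↑(X t₀) * (X s : D)) := by simp only [Units.val_mul, mul_assoc]
              _ = (X t₀ : D) * (↑(γ t₀) * (↑(X s) * ↑(X t₀))) := by rw [e1]
              _ = ((X t₀ : D) * ↑(γ t₀)) * (↑(X s) * ↑(X t₀)) := (mul_assoc _ _ _).symm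
              _ = (↑(σ t₀ (γ t₀)) * (X t₀ : D)) * (↑(X s) * ↑(X t₀)) := by rw [e2]
              _ = ↑(σ t₀ (γ t₀)) * ((X t₀ : D) * (↑(X s) * ↑(X t₀))) := mul_assoc _ _ _
              _ = ↑(σ t₀ (γ t₀)) * (((X t₀ : D) * ↑(X s)) * ↑(X t₀)) := by simp only [mul_assoc]
              _ = ↑(σ t₀ (γ t₀)) * ((↑(γ t₀) * (↑(X s) * ↑(X t₀))) * ↑(X t₀)) := by rw [e1]
              _ = (↑(σ t₀ (γ t₀)) * ↑(γ t₀)) * ((↑(X s) * ↑(X t₀)) * ↑(X t₀)) := by simp only [mul_assoc]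
              _ = (↑(σ t₀ (γ t₀)) * ↑(γ t₀)) * ((X s : D) * ((X t₀ : D) * ↑(X t₀))) := by simp only [mul_assoc]
          rw [one_mul, Units.val_mul, Units.val_mul]
          rw [← this]
        have := (X s * (X t₀ * X t₀)).isUnit.mul_right_cancel emain
        apply Subtype.ext
        show (↑(σ t₀ (γ t₀)) : D) * ↑(γ t₀) = 1
        rw [this]
      -- Hilbert 90: choose `d` with `σ t₀ d * γ t₀ = d`
      obtain ⟨dF, hdF0, hdFeq⟩ := auxGDA_h90 (σ t₀) z₀' hy₀ (γ t₀) hγ0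
      -- `γ` is constant on noncommuting degrees
      have hγconst : ∀ t : ↥T, (¬ ∀ z ∈ comp (1 : G), (X t : D) * z = z * (X t : D)) →
          γ t = γ t₀ := by
        intro t ht
        have hσt : σ t = σ t₀ := hagree t ht
        have hWmem : ((↑(X t * (X t₀)⁻¹) : D)) ∈ comp ((t * t₀⁻¹ : ↥T) : G) := by
          have h := hmulmem _ _ _ _ (hX t) (hinv _ _ (hX t₀))
          exact h
        have hWcomm : ∀ z ∈ comp (1 : G),
            (↑(X t * (X t₀)⁻¹) : D) * z = z * ↑(X t * (X t₀)⁻¹) := by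
          intro z hz
          have h1 : (X t₀ : D) * ↑(σ t₀ ⟨z, hz⟩) = ↑(σ t₀ (σ t₀ ⟨z, hz⟩)) * (X t₀ : D) :=
            hσmul t₀ _
          rw [hσsq] at h1
          have h2 : (↑(X t₀)⁻¹ : D) * z = ↑(σ t₀ ⟨z, hz⟩) * ↑(X t₀)⁻¹ := by
            calc (↑(X t₀)⁻¹ : D) * z
                = (↑(X t₀)⁻¹ : D) * ((z * (X t₀ : D)) * ↑(X t₀)⁻¹) := by
                  rw [Units.mul_inv_cancel_right]
              _ = (↑(X t₀)⁻¹ : D) * (((X t₀ : D) * ↑(σ t₀ ⟨z, hz⟩)) * ↑(X t₀)⁻¹) := by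
                  rw [h1]
              _ = ↑(σ t₀ ⟨z, hz⟩) * ↑(X t₀)⁻¹ := by
                  rw [← mul_assoc, Units.inv_mul_cancel_left]
          have h3 : (X t : D) * ↑(σ t₀ ⟨z, hz⟩) = ↑(σ t (σ t₀ ⟨z, hz⟩)) * (X t : D) :=
            hσmul t _
          rw [hσt, hσsq] at h3
          calc (↑(X t * (X t₀)⁻¹) : D) * z
              = (X t : D) * ((↑(X t₀)⁻¹ : D) * z) := by simp only [Units.val_mul, mul_assoc]
            _ = (X t : D) * (↑(σ t₀ ⟨z, hz⟩) * ↑(X t₀)⁻¹) := by rw [h2]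
            _ = ((X t : D) * ↑(σ t₀ ⟨z, hz⟩)) * ↑(X t₀)⁻¹ := (mul_assoc _ _ _).symm
            _ = (↑(⟨z, hz⟩ : ↥S) * (X t : D)) * ↑(X t₀)⁻¹ := by rw [h3]
            _ = z * ↑(X t * (X t₀)⁻¹) := by simp only [Units.val_mul, mul_assoc]
        have hrK : ∀ z ∈ comp (1 : G),
            (X (t * t₀⁻¹) : D) * z = z * (X (t * t₀⁻¹) : D) :=
          htrans (t * t₀⁻¹) (X t * (X t₀)⁻¹) hWmem hWcomm
        have hXsW : (X s : D) * ↑(X t * (X t₀)⁻¹) = ↑(X t * (X t₀)⁻¹) * (X s : D) :=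
          hXsgen (t * t₀⁻¹) (X t * (X t₀)⁻¹) hWmem (Hs2 (t * t₀⁻¹) hrK)
        have hWX : (↑(X t * (X t₀)⁻¹) : D) * ↑(X t₀) = (X t : D) := by
          rw [Units.val_mul, Units.inv_mul_cancel_right]
        have emain : ↑(γ t) * ((↑(X s) : D) * ↑(X t)) = ↑(γ t₀) * ((↑(X s) : D) * ↑(X t)) := by
          calc (↑(γ t) : D) * ((↑(X s) : D) * ↑(X t)) = (X t : D) * ↑(X s) := (hγ t).symm
            _ = (↑(X t * (X t₀)⁻¹) * (X t₀ : D)) * ↑(X s) := by rw [hWX]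
            _ = ↑(X t * (X t₀)⁻¹) * ((X t₀ : D) * ↑(X s)) := mul_assoc _ _ _
            _ = ↑(X t * (X t₀)⁻¹) * (↑(γ t₀) * (↑(X s) * ↑(X t₀))) := by rw [hγ t₀]
            _ = (↑(X t * (X t₀)⁻¹) * ↑(γ t₀)) * (↑(X s) * ↑(X t₀)) := (mul_assoc _ _ _).symm
            _ = (↑(γ t₀) * ↑(X t * (X t₀)⁻¹)) * (↑(X s) * ↑(X t₀)) := by
                rw [hWcomm (↑(γ t₀)) (γ t₀).2]
            _ = ↑(γ t₀) * (↑(X t * (X t₀)⁻¹) * (↑(X s) * ↑(X t₀))) := mul_assoc _ _ _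
            _ = ↑(γ t₀) * ((↑(X t * (X t₀)⁻¹) * ↑(X s)) * ↑(X t₀)) := by simp only [mul_assoc]
            _ = ↑(γ t₀) * (((X s : D) * ↑(X t * (X t₀)⁻¹)) * ↑(X t₀)) := by rw [hXsW]
            _ = ↑(γ t₀) * ((X s : D) * (↑(X t * (X t₀)⁻¹) * ↑(X t₀))) := by simp only [mul_assoc]
            _ = ↑(γ t₀) * ((↑(X s) : D) * ↑(X t)) := by rw [hWX]
        have hcancel : (↑(γ t) : D) = ↑(γ t₀) := by
          have e2 : (↑(γ t) : D) * ↑(X s * X t) = ↑(γ t₀) * ↑(X s * X t) := by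
            rw [Units.val_mul]
            exact emain
          exact (X s * X t).isUnit.mul_right_cancel e2
        exact Subtype.ext hcancel
      -- the key identity
      have hKEY : ∀ t : ↥T, (↑(σ t dF) : D) * ↑(γ t) = ↑dF := by
        intro t
        by_cases ht : ∀ z ∈ comp (1 : G), (X t : D) * z = z * (X t : D)
        · rw [hfix1 t dF (ht (↑dF) dF.2), hγ1 t (Hs2 t ht)]
          show (↑dF : D) * ↑(1 : ↥S) = ↑dF
          rw [OneMemClass.coe_one, mul_one]
        · rw [hagree t ht, hγconst t ht]
          have : ((σ t₀ dF * γ t₀ : ↥S) : D) = ((dF : ↥S) : D) := by rw [hdFeq]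
          rwa [MulMemClass.coe_mul] at this
      -- assemble the central element
      refine ⟨↑dF, dF.2, fun h => hdF0 (Subtype.ext h), ?_, ?_⟩
      · intro z hz
        calc ((↑dF : D) * ↑(X s)) * z = (↑dF : D) * ((↑(X s) : D) * z) := mul_assoc _ _ _
          _ = (↑dF : D) * (z * ↑(X s)) := by rw [Hs1 z hz]
          _ = ((↑dF : D) * z) * ↑(X s) := (mul_assoc _ _ _).symm
          _ = (z * (↑dF : D)) * ↑(X s) := by rw [hcomm (↑dF) dF.2 z hz]
          _ = z * ((↑dF : D) * ↑(X s)) := mul_assoc _ _ _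
      · intro t
        calc ((↑dF : D) * ↑(X s)) * ↑(X t) = (↑dF : D) * (↑(X s) * ↑(X t)) := mul_assoc _ _ _
          _ = ((↑(σ t dF) : D) * ↑(γ t)) * (↑(X s) * ↑(X t)) := by rw [hKEY t]
          _ = (↑(σ t dF) : D) * (↑(γ t) * (↑(X s) * ↑(X t))) := mul_assoc _ _ _
          _ = (↑(σ t dF) : D) * ((X t : D) * ↑(X s)) := by rw [← hγ t]
          _ = ((↑(σ t dF) : D) * (X t : D)) * ↑(X s) := (mul_assoc _ _ _).symm
          _ = ((X t : D) * ↑dF) * ↑(X s) := by rw [← hσmul t dF]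
          _ = (X t : D) * ((↑dF : D) * ↑(X s)) := mul_assoc _ _ _
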